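/- If α₁ < α₂ < ... < α_p are reals greater than 1/2 and λ₁,...,λ_p are reals such that the function x₁ ↦ ∫₀¹ Σᵢ λᵢ ds/((x₁²+s²)^{αᵢ} x₁) has a finite limit as x₁ → 0⁺, then all λᵢ = 0. -/

import Mathlib

open Real Filter Set MeasureTheory intervalIntegral

noncomputable def Jf (a x : ℝ) : ℝ := ∫ s in (0:ℝ)..1, ((x ^ 2 + s ^ 2) ^ a)⁻¹

lemma cont_inv (a x : ℝ) (hx : 0 < x) :
    Continuous fun s : ℝ => ((x ^ 2 + s ^ 2) ^ a)⁻¹ := by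
  have h1 : Continuous fun s : ℝ => (x ^ 2 + s ^ 2) ^ a := by
    apply Continuous.rpow_const (by continuity)
    intro s; left; positivity
  exact h1.inv₀ fun s => by positivity

lemma Jf_nonneg (a x : ℝ) : 0 ≤ Jf a x :=
  intervalIntegral.integral_nonneg (by norm_num) (fun s _ => by positivity)

lemma sq_rpow (x : ℝ) (hx : 0 < x) (a : ℝ) : ((x ^ 2 : ℝ)) ^ a = x ^ (2 * a) := by
  rw [← Real.rpow_natCast x 2, ← Real.rpow_mul hx.le]
  norm_num

lemma J_lb (a x : ℝ) (ha : 0 ≤ a) (hx : 0 < x) (hx1 : x ≤ 1) :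
    2 ^ (-a) * x ^ (1 - 2 * a) ≤ Jf a x := by
  have hc := cont_inv a x hx
  have hint : ∀ u v : ℝ,
      IntervalIntegrable (fun s => ((x ^ 2 + s ^ 2) ^ a)⁻¹) volume u v :=
    fun u v => hc.intervalIntegrable u v
  have hsplit : Jf a x = (∫ s in (0:ℝ)..x, ((x ^ 2 + s ^ 2) ^ a)⁻¹)
      + ∫ s in x..1, ((x ^ 2 + s ^ 2) ^ a)⁻¹ :=
    (integral_add_adjacent_intervals (hint 0 x) (hint x 1)).symm
  have h2 : 0 ≤ ∫ s in x..1, ((x ^ 2 + s ^ 2) ^ a)⁻¹ :=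
    intervalIntegral.integral_nonneg hx1 fun s _ => by positivity
  have h1 : (∫ s in (0:ℝ)..x, (((2 * x ^ 2 : ℝ)) ^ a)⁻¹)
      ≤ ∫ s in (0:ℝ)..x, ((x ^ 2 + s ^ 2) ^ a)⁻¹ := by
    apply intervalIntegral.integral_mono_on hx.le intervalIntegrable_const (hint 0 x)
    intro s hs
    have hs2 : s ^ 2 ≤ x ^ 2 := by nlinarith [hs.1, hs.2]
    have hb : (x ^ 2 + s ^ 2 : ℝ) ^ a ≤ (2 * x ^ 2) ^ a :=
      Real.rpow_le_rpow (by positivity) (by nlinarith) ha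
    exact inv_anti₀ (by positivity) hb
  rw [intervalIntegral.integral_const] at h1
  have heq : 2 ^ (-a) * x ^ (1 - 2 * a) = (x - 0) • (((2 * x ^ 2 : ℝ)) ^ a)⁻¹ := by
    rw [smul_eq_mul, Real.mul_rpow (by norm_num) (by positivity), sq_rpow x hx a,
      show (1 - 2 * a) = 1 + (-(2 * a)) by ring, Real.rpow_add hx, Real.rpow_one,
      Real.rpow_neg (by norm_num : (0:ℝ) ≤ 2), Real.rpow_neg hx.le, mul_inv]
    ring
  rw [hsplit, heq]
  linarith

lemma J_ub (a x : ℝ) (ha : 1 / 2 < a) (hx : 0 < x) (hx1 : x ≤ 1) :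
    Jf a x ≤ (2 * a / (2 * a - 1)) * x ^ (1 - 2 * a) := by
  have hc := cont_inv a x hx
  have hint : ∀ u v : ℝ,
      IntervalIntegrable (fun s => ((x ^ 2 + s ^ 2) ^ a)⁻¹) volume u v :=
    fun u v => hc.intervalIntegrable u v
  have hsplit : Jf a x = (∫ s in (0:ℝ)..x, ((x ^ 2 + s ^ 2) ^ a)⁻¹)
      + ∫ s in x..1, ((x ^ 2 + s ^ 2) ^ a)⁻¹ :=
    (integral_add_adjacent_intervals (hint 0 x) (hint x 1)).symm
  have ha0 : (0:ℝ) ≤ a := by linarith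
  have h2a : (0:ℝ) < 2 * a - 1 := by linarith
  have h1 : (∫ s in (0:ℝ)..x, ((x ^ 2 + s ^ 2) ^ a)⁻¹)
      ≤ (x - 0) • (((x ^ 2 : ℝ)) ^ a)⁻¹ := by
    rw [← intervalIntegral.integral_const]
    apply intervalIntegral.integral_mono_on hx.le (hint 0 x) intervalIntegrable_const
    intro s hs
    exact inv_anti₀ (by positivity)
      (Real.rpow_le_rpow (by positivity) (by nlinarith) ha0)
  have hnz : (0:ℝ) ∉ Set.uIcc x 1 := by
    rw [Set.uIcc_of_le hx1]
    rintro ⟨h0, -⟩; linarith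
  have hint2 : IntervalIntegrable (fun s : ℝ => s ^ (-(2 * a))) volume x 1 :=
    intervalIntegrable_rpow (Or.inr hnz)
  have h2 : (∫ s in x..1, ((x ^ 2 + s ^ 2) ^ a)⁻¹) ≤ ∫ s in x..1, s ^ (-(2 * a)) := by
    apply intervalIntegral.integral_mono_on hx1 (hint x 1) hint2
    intro s hs
    have hs0 : 0 < s := lt_of_lt_of_le hx hs.1
    have : ((x ^ 2 + s ^ 2 : ℝ) ^ a)⁻¹ ≤ (((s ^ 2 : ℝ)) ^ a)⁻¹ :=
      inv_anti₀ (by positivity)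
        (Real.rpow_le_rpow (by positivity) (by nlinarith) ha0)
    rwa [sq_rpow s hs0, ← Real.rpow_neg hs0.le] at this
  have hne3 : -(2 * a) ≠ -1 := by
    intro hc2
    have : a = 1 / 2 := by linarith
    linarith
  have h3 : (∫ s in x..1, s ^ (-(2 * a)))
      = ((1:ℝ) ^ (-(2 * a) + 1) - x ^ (-(2 * a) + 1)) / (-(2 * a) + 1) :=
    integral_rpow (Or.inr ⟨hne3, hnz⟩)
  set y := x ^ (1 - 2 * a) with hy
  have hy0 : 0 < y := Real.rpow_pos_of_pos hx _
  have hxy : x * (((x ^ 2 : ℝ)) ^ a)⁻¹ = y := by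
    rw [sq_rpow x hx a, ← Real.rpow_neg hx.le, hy,
      show (1 - 2 * a) = 1 + (-(2 * a)) by ring, Real.rpow_add hx, Real.rpow_one]
  have hne1 : (1:ℝ) - 2 * a ≠ 0 := by linarith
  have hne2 : 2 * a - 1 ≠ 0 := ne_of_gt h2a
  have h4 : ((1:ℝ) ^ (-(2 * a) + 1) - x ^ (-(2 * a) + 1)) / (-(2 * a) + 1)
      ≤ y / (2 * a - 1) := by
    rw [Real.one_rpow, show -(2 * a) + 1 = 1 - 2 * a by ring, ← hy]
    have e : (1 - y) / (1 - 2 * a) = (y - 1) / (2 * a - 1) := by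
      field_simp
      ring
    rw [e]
    gcongr
    linarith
  have h5 : y + y / (2 * a - 1) = (2 * a / (2 * a - 1)) * y := by
    field_simp
    ring
  rw [hsplit]
  have h1' : (∫ s in (0:ℝ)..x, ((x ^ 2 + s ^ 2) ^ a)⁻¹) ≤ y := by
    rw [← hxy]; simpa using h1
  linarith

lemma J_mul_lb (a x : ℝ) (ha : 0 ≤ a) (hx : 0 < x) (hx1 : x ≤ 1) :
    (2:ℝ) ^ (-a) ≤ Jf a x * x ^ (2 * a - 1) := by
  have h := J_lb a x ha hx hx1
  have hp : (0:ℝ) < x ^ (2 * a - 1) := Real.rpow_pos_of_pos hx _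
  have h2 := mul_le_mul_of_nonneg_right h hp.le
  rwa [mul_assoc, ← Real.rpow_add hx, show 1 - 2 * a + (2 * a - 1) = 0 by ring,
    Real.rpow_zero, mul_one] at h2

lemma J_mul_ub (a c x : ℝ) (ha : 1 / 2 < a) (hx : 0 < x) (hx1 : x ≤ 1) :
    Jf a x * x ^ c ≤ (2 * a / (2 * a - 1)) * x ^ (1 - 2 * a + c) := by
  have h := J_ub a x ha hx hx1
  have hp : (0:ℝ) ≤ x ^ c := (Real.rpow_pos_of_pos hx c).le
  calc Jf a x * x ^ c ≤ (2 * a / (2 * a - 1)) * x ^ (1 - 2 * a) * x ^ c :=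
        mul_le_mul_of_nonneg_right h hp
    _ = _ := by rw [mul_assoc, ← Real.rpow_add hx]

/-- If `α₁ < … < α_p` are reals greater than `1/2` and
`λ₁,…,λ_p` are reals such that
`x₁ ↦ ∫₀¹ Σᵢ λᵢ ds/((x₁²+s²)^{αᵢ} x₁)` has a finite limit as `x₁ → 0⁺`,
then all `λᵢ = 0`. -/
theorem rpow_classes_linearly_independent (p : ℕ) (α : Fin p → ℝ)
    (hmono : StrictMono α) (hα : ∀ i, 1 / 2 < α i) (lam : Fin p → ℝ)
    (h : ∃ L : ℝ, Filter.Tendsto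
      (fun x₁ : ℝ => ∫ s in (0 : ℝ)..1,
        ∑ i, lam i / ((x₁ ^ 2 + s ^ 2) ^ (α i) * x₁))
      (nhdsWithin 0 (Set.Ioi 0)) (nhds L)) :
    ∀ i, lam i = 0 := by
  classical
  intro i0
  by_contra hne
  obtain ⟨L, hL⟩ := h
  set T : Finset (Fin p) := Finset.univ.filter (fun i => lam i ≠ 0) with hT
  have hTne : T.Nonempty := ⟨i0, by simp [hT, hne]⟩
  set j := T.max' hTne with hj
  have hlamj : lam j ≠ 0 := by
    have := T.max'_mem hTne
    simpa [hT] using this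
  have hmax : ∀ i, lam i ≠ 0 → i ≤ j := fun i hi => T.le_max' i (by simp [hT, hi])
  set β := α j with hβ
  have hβ2 : (1:ℝ) / 2 < β := hα j
  set F := fun x₁ : ℝ => ∫ s in (0 : ℝ)..1,
      ∑ i, lam i / ((x₁ ^ 2 + s ^ 2) ^ (α i) * x₁) with hF
  have hOioo : Set.Ioo (0:ℝ) 1 ∈ nhdsWithin (0:ℝ) (Set.Ioi 0) :=
    Ioo_mem_nhdsGT_of_mem ⟨le_refl 0, one_pos⟩
  -- rewrite F
  have hFeq : ∀ x : ℝ, 0 < x → F x = ∑ i, (lam i / x) * Jf (α i) x := by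
    intro x hx
    have hInt : ∀ i : Fin p, IntervalIntegrable
        (fun s => (lam i / x) * ((x ^ 2 + s ^ 2) ^ (α i))⁻¹) volume 0 1 :=
      fun i => (continuous_const.mul (cont_inv (α i) x hx)).intervalIntegrable 0 1
    calc F x = ∫ s in (0:ℝ)..1, ∑ i, (lam i / x) * ((x ^ 2 + s ^ 2) ^ (α i))⁻¹ := by
          apply intervalIntegral.integral_congr
          intro s _
          apply Finset.sum_congr rfl
          intro i _
          rw [div_eq_mul_inv, div_eq_mul_inv, mul_inv]
          ring
      _ = ∑ i, ∫ s in (0:ℝ)..1, (lam i / x) * ((x ^ 2 + s ^ 2) ^ (α i))⁻¹ :=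
          intervalIntegral.integral_finset_sum (fun i _ => hInt i)
      _ = ∑ i, (lam i / x) * Jf (α i) x := by
          refine Finset.sum_congr rfl fun i _ => ?_
          exact intervalIntegral.integral_const_mul _ _
  have hsum : ∀ x ∈ Set.Ioo (0:ℝ) 1,
      F x * x ^ (2 * β) = ∑ i, lam i * (Jf (α i) x * x ^ (2 * β - 1)) := by
    intro x hx
    rw [hFeq x hx.1, Finset.sum_mul]
    refine Finset.sum_congr rfl fun i _ => ?_
    rw [show (2 * β - 1) = 2 * β + (-1) by ring, Real.rpow_add hx.1,
      Real.rpow_neg_one]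
    field_simp
  -- x ^ (2β) tends to 0
  have hpow : Filter.Tendsto (fun x : ℝ => x ^ (2 * β))
      (nhdsWithin 0 (Set.Ioi 0)) (nhds 0) := by
    have hc : ContinuousAt (fun x : ℝ => x ^ (2 * β)) 0 :=
      Real.continuousAt_rpow_const 0 (2 * β) (Or.inr (by linarith))
    have ht := hc.tendsto
    rw [Real.zero_rpow (ne_of_gt (by linarith : (0:ℝ) < 2 * β))] at ht
    exact ht.mono_left nhdsWithin_le_nhds
  have hGtend : Filter.Tendsto (fun x => F x * x ^ (2 * β))
      (nhdsWithin 0 (Set.Ioi 0)) (nhds 0) := by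
    have := hL.mul hpow
    simpa using this
  -- the small terms
  have hsmall : ∀ i : Fin p, i ≠ j →
      Filter.Tendsto (fun x => lam i * (Jf (α i) x * x ^ (2 * β - 1)))
        (nhdsWithin 0 (Set.Ioi 0)) (nhds 0) := by
    intro i hij
    rcases lt_or_gt_of_ne hij with hlt | hgt
    · -- i < j
      have hai : α i < β := hmono hlt
      have hexp : (0:ℝ) < 2 * β - 2 * α i := by linarith
      set C := |lam i| * (2 * α i / (2 * α i - 1)) with hC
      have hbt : Filter.Tendsto (fun x : ℝ => C * x ^ (2 * β - 2 * α i))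
          (nhdsWithin 0 (Set.Ioi 0)) (nhds 0) := by
        have hc : ContinuousAt (fun x : ℝ => x ^ (2 * β - 2 * α i)) 0 :=
          Real.continuousAt_rpow_const 0 _ (Or.inr hexp.le)
        have ht := hc.tendsto
        rw [Real.zero_rpow hexp.ne'] at ht
        have ht2 : Filter.Tendsto (fun x : ℝ => x ^ (2 * β - 2 * α i))
            (nhdsWithin 0 (Set.Ioi 0)) (nhds 0) := ht.mono_left nhdsWithin_le_nhds
        have := ht2.const_mul C
        simpa using this
      apply squeeze_zero_norm' ?_ hbt
      filter_upwards [hOioo] with x hx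
      have hJn : 0 ≤ Jf (α i) x * x ^ (2 * β - 1) :=
        mul_nonneg (Jf_nonneg _ _) (Real.rpow_pos_of_pos hx.1 _).le
      have hub := J_mul_ub (α i) (2 * β - 1) x (hα i) hx.1 hx.2.le
      rw [show 1 - 2 * α i + (2 * β - 1) = 2 * β - 2 * α i by ring] at hub
      rw [Real.norm_eq_abs, abs_mul, abs_of_nonneg hJn, hC, mul_assoc]
      exact mul_le_mul_of_nonneg_left hub (abs_nonneg _)
    · -- j < i, so lam i = 0
      have : lam i = 0 := by
        by_contra hli
        exact absurd (hmax i hli) (not_le.mpr hgt)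
      simp [this]
  have hGsum : Filter.Tendsto
      (fun x => ∑ i ∈ Finset.univ.erase j, lam i * (Jf (α i) x * x ^ (2 * β - 1)))
      (nhdsWithin 0 (Set.Ioi 0)) (nhds 0) := by
    have := tendsto_finset_sum (Finset.univ.erase j)
      (fun i hi => hsmall i (Finset.ne_of_mem_erase hi))
    simpa using this
  -- the main term tends to 0
  have htj : Filter.Tendsto (fun x => lam j * (Jf β x * x ^ (2 * β - 1)))
      (nhdsWithin 0 (Set.Ioi 0)) (nhds 0) := by
    have hsub := hGtend.sub hGsum
    rw [sub_zero] at hsub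
    apply Filter.Tendsto.congr' ?_ hsub
    filter_upwards [hOioo] with x hx
    have h1 := hsum x hx
    have h2 : ∑ i, lam i * (Jf (α i) x * x ^ (2 * β - 1))
        = lam j * (Jf β x * x ^ (2 * β - 1))
          + ∑ i ∈ Finset.univ.erase j, lam i * (Jf (α i) x * x ^ (2 * β - 1)) :=
      (Finset.add_sum_erase _ _ (Finset.mem_univ j)).symm
    rw [h1, h2]
    ring
  -- contradiction
  have hpos : (0:ℝ) < |lam j| * 2 ^ (-β) :=
    mul_pos (abs_pos.mpr hlamj) (Real.rpow_pos_of_pos (by norm_num) _)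
  have hev : ∀ᶠ x in nhdsWithin (0:ℝ) (Set.Ioi 0),
      |lam j| * 2 ^ (-β) ≤ |lam j * (Jf β x * x ^ (2 * β - 1))| := by
    filter_upwards [hOioo] with x hx
    rw [abs_mul]
    have hJm := J_mul_lb β x (by linarith) hx.1 hx.2.le
    have habs : |Jf β x * x ^ (2 * β - 1)| = Jf β x * x ^ (2 * β - 1) :=
      abs_of_nonneg (mul_nonneg (Jf_nonneg _ _) (Real.rpow_pos_of_pos hx.1 _).le)
    rw [habs]
    exact mul_le_mul_of_nonneg_left hJm (abs_nonneg _)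
  have hmem : Set.Ioo (-(|lam j| * 2 ^ (-β))) (|lam j| * 2 ^ (-β)) ∈ nhds (0:ℝ) :=
    Ioo_mem_nhds (neg_lt_zero.mpr hpos) hpos
  have hlt : ∀ᶠ x in nhdsWithin (0:ℝ) (Set.Ioi 0),
      |lam j * (Jf β x * x ^ (2 * β - 1))| < |lam j| * 2 ^ (-β) := by
    filter_upwards [htj hmem] with x hx
    exact abs_lt.mpr ⟨hx.1, hx.2⟩
  obtain ⟨x, h1, h2⟩ := (hev.and hlt).exists
  linarith
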